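/- arXiv:1903.01964 — 5 statements merged into one kernel-verified Lean document; each statement's English description precedes it below -/
import Mathlib

section
/- In a bipolar ABA framework F = (ℒ, ℛ, 𝒜, ¯), all minimal attacks are by singleton sets: if A ⊆ 𝒜 minimally attacks B ⊆ 𝒜, then A = {α} for some α ∈ 𝒜. -/
/-- An ABA framework over a type `S` of sentences (the language `ℒ` is all of `S`).
A rule `(φ, body) ∈ Rules` stands for `φ ← body` (head `φ`, body a list of sentences;
an empty body is the rule `φ ← ⊤`). -/
structure ABA (S : Type*) where
  Rules : Set (S × List S)
  Asms : Set S
  contrary : S → S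
  asms_nonempty : Asms.Nonempty

namespace ABA

variable {S : Type*}

/-- A framework is bipolar iff every rule has the form `φ ← α` with `α` an assumption
and `φ` either an assumption or the contrary of an assumption. -/
def Bipolar (F : ABA S) : Prop :=
  ∀ r ∈ F.Rules, ∃ α ∈ F.Asms, r.2 = [α] ∧
    (r.1 ∈ F.Asms ∨ ∃ β ∈ F.Asms, r.1 = F.contrary β)

/-- `F.Deduces A R φ` : there is a deduction tree for `φ` whose leaves are labelled by `⊤`
or by assumptions (`A` being the set of all such leaf assumptions), and each non-leaf `ψ`
has children labelled by the body of some `ψ`-headed rule (`R` being the set of rules used). -/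
inductive Deduces (F : ABA S) : Set S → Set (S × List S) → S → Prop
  | assumption {α : S} (h : α ∈ F.Asms) : Deduces F {α} ∅ α
  | step {φ : S} {body : List S} (hr : (φ, body) ∈ F.Rules)
      (As : Fin body.length → Set S) (Rs : Fin body.length → Set (S × List S))
      (hd : ∀ i : Fin body.length, Deduces F (As i) (Rs i) (body.get i)) :
      Deduces F (⋃ i, As i) (insert (φ, body) (⋃ i, Rs i)) φ

/-- `A` attacks `B` iff there is a deduction `A' ⊢^R β̄` with `β ∈ B`, `A' ⊆ A`, `R ⊆ ℛ`. -/
def Attacks (F : ABA S) (A B : Set S) : Prop :=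
  ∃ β ∈ B, ∃ A' ⊆ A, ∃ R ⊆ F.Rules, F.Deduces A' R (F.contrary β)

/-- Closure: `Cl(A) = {α ∈ 𝒜 : ∃ A' ⊆ A, R ⊆ ℛ with A' ⊢^R α}`. -/
def Cl (F : ABA S) (A : Set S) : Set S :=
  {α ∈ F.Asms | ∃ A' ⊆ A, ∃ R ⊆ F.Rules, F.Deduces A' R α}

def Closed (F : ABA S) (A : Set S) : Prop := F.Cl A = A

def ConflictFree (F : ABA S) (A : Set S) : Prop := ¬ F.Attacks A A

/-- `A` defends `α` iff every closed `B ⊆ 𝒜` attacking `{α}` is attacked by `A`. -/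
def Defends (F : ABA S) (A : Set S) (α : S) : Prop :=
  ∀ B ⊆ F.Asms, F.Closed B → F.Attacks B {α} → F.Attacks A B

/-- `E ⊆ 𝒜` is admissible iff it is closed, conflict-free and defends itself. -/
def Admissible (F : ABA S) (E : Set S) : Prop :=
  E ⊆ F.Asms ∧ F.Closed E ∧ F.ConflictFree E ∧ ∀ α ∈ E, F.Defends E α

/-- `E` is preferred iff it is ⊆-maximally admissible. -/
def Preferred (F : ABA S) (E : Set S) : Prop :=
  F.Admissible E ∧ ∀ E', F.Admissible E' → E ⊆ E' → E' = E

/-- `E ⊆ 𝒜` is set-stable iff it is closed, conflict-free and attacks `Cl({α})`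
for every `α ∈ 𝒜 \ E`. -/
def SetStable (F : ABA S) (E : Set S) : Prop :=
  E ⊆ F.Asms ∧ F.Closed E ∧ F.ConflictFree E ∧
    ∀ α ∈ F.Asms \ E, F.Attacks E (F.Cl {α})

/-- `A` minimally attacks `B` iff `A` attacks `B` and no proper subset of `A` attacks `B`. -/
def MinAttacks (F : ABA S) (A B : Set S) : Prop :=
  F.Attacks A B ∧ ∀ A' ⊂ A, ¬ F.Attacks A' B

end ABA

lemma bipolar_deduces_singleton {S : Type*} (F : ABA S) (hF : F.Bipolar)
    {A : Set S} {R : Set (S × List S)} {φ : S} (hd : F.Deduces A R φ) :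
    ∃ α ∈ F.Asms, A = {α} := by
  induction hd with
  | assumption h => exact ⟨_, h, rfl⟩
  | @step φ body hr As Rs hd ih =>
    obtain ⟨α, hα, hbody, _⟩ := hF _ hr
    subst hbody
    obtain ⟨γ, hγ, hAs⟩ := ih ⟨0, by simp⟩
    refine ⟨γ, hγ, ?_⟩
    rw [← hAs]
    ext x
    constructor
    · rintro ⟨s, ⟨i, rfl⟩, hx⟩
      have : i = ⟨0, by simp⟩ := by
        apply Subsingleton.elim (α := Fin 1)
      rwa [← this]
    · intro hx
      exact ⟨_, ⟨⟨0, by simp⟩, rfl⟩, hx⟩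

/-- In a bipolar ABA framework, all minimal attacks are by singleton sets. -/
theorem bipolar_min_attack_singleton {S : Type*} (F : ABA S) (hF : F.Bipolar)
    (A B : Set S) (hA : A ⊆ F.Asms) (hB : B ⊆ F.Asms)
    (h : F.MinAttacks A B) :
    ∃ α ∈ F.Asms, A = {α} := by
  obtain ⟨⟨β, hβ, A', hA', R, hR, hd⟩, hmin⟩ := h
  obtain ⟨α, hα, rfl⟩ := bipolar_deduces_singleton F hF hd
  refine ⟨α, hα, ?_⟩
  by_contra hne
  exact hmin {α} ⟨hA', fun hsub => hne (subset_antisymm (hsub) hA')⟩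
    ⟨β, hβ, {α}, subset_rfl, R, hR, hd⟩
end

section
/- In a bipolar ABA framework F = (ℒ, ℛ, 𝒜, ¯), if A ⊆ 𝒜 attacks B ⊆ 𝒜, then there exists an assumption α ∈ A such that the singleton {α} attacks B. -/
lemma bipolar_singleton_support {S : Type*} (F : ABA S) (hF : F.Bipolar)
    {A : Set S} {R : Set (S × List S)} {φ : S}
    (h : F.Deduces A R φ) (hR : R ⊆ F.Rules) : ∃ α ∈ F.Asms, A = {α} := by
  induction h with
  | assumption h => exact ⟨_, h, rfl⟩
  | @step φ body hr As Rs hd ih =>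
    obtain ⟨α, hα, hbody, -⟩ := hF _ hr
    have hlen : body.length = 1 := by simp only at hbody; rw [hbody]; rfl
    have i0 : Fin body.length := ⟨0, by omega⟩
    have hRs : Rs i0 ⊆ F.Rules := fun x hx =>
      hR (Set.mem_insert_iff.mpr (Or.inr (Set.mem_iUnion.mpr ⟨i0, hx⟩)))
    obtain ⟨β, hβ, hAs⟩ := ih i0 hRs
    refine ⟨β, hβ, ?_⟩
    rw [← hAs]
    ext x
    simp only [Set.mem_iUnion]
    constructor
    · rintro ⟨i, hi⟩
      have : i = i0 := by ext; omega
      rwa [← this]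
    · exact fun hx => ⟨i0, hx⟩

/-- In a bipolar ABA framework, if `A` attacks `B` then some singleton
`{α}` with `α ∈ A` attacks `B`. -/
theorem bipolar_attack_singleton {S : Type*} (F : ABA S) (hF : F.Bipolar)
    (A B : Set S) (hA : A ⊆ F.Asms) (hB : B ⊆ F.Asms)
    (h : F.Attacks A B) :
    ∃ α ∈ A, F.Attacks {α} B := by
  obtain ⟨β, hβ, A', hA', R, hR, hd⟩ := h
  obtain ⟨α, hαasm, rfl⟩ := bipolar_singleton_support F hF hd hR
  exact ⟨α, hA' rfl, β, hβ, {α}, subset_rfl, R, hR, hd⟩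
end

section
/- In a bipolar ABA framework F = (ℒ, ℛ, 𝒜, ¯), for all A, B ⊆ 𝒜: A attacks B if and only if there exist α ∈ A, β ∈ B and R ⊆ ℛ such that {α} ⊢^R β̄ is a deduction for the contrary of β supported by the singleton {α}. -/
/-- In a bipolar ABA framework, `A` attacks `B` iff some singleton `{α}`
with `α ∈ A` supports a deduction of the contrary of some `β ∈ B`. -/
theorem bipolar_attacks_iff_singleton_deduction {S : Type*} (F : ABA S) (hF : F.Bipolar)
    (A B : Set S) (hA : A ⊆ F.Asms) (hB : B ⊆ F.Asms) :
    F.Attacks A B ↔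
      ∃ α ∈ A, ∃ β ∈ B, ∃ R ⊆ F.Rules, F.Deduces {α} R (F.contrary β) := by
  have key : ∀ {A' R φ}, F.Deduces A' R φ → ∃ α, A' = {α} := by
    intro A' R φ h
    induction h with
    | assumption h => exact ⟨_, rfl⟩
    | step hr As Rs hd ih =>
      obtain ⟨α, hα, hbody, _⟩ := hF _ hr
      subst hbody
      obtain ⟨γ, hγ⟩ := ih ⟨0, by simp⟩
      refine ⟨γ, ?_⟩
      have : (⋃ i, As i) = As ⟨0, by simp⟩ := by
        apply Set.Subset.antisymm
        · exact Set.iUnion_subset fun i => by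
            have : i = ⟨0, by simp⟩ := Fin.ext (by have := i.isLt; simpa using Nat.lt_one_iff.mp (by simpa using this))
            rw [this]
        · exact Set.subset_iUnion As _
      rw [this, hγ]
  constructor
  · rintro ⟨β, hβ, A', hA', R, hR, hd⟩
    obtain ⟨α, rfl⟩ := key hd
    exact ⟨α, hA' rfl, β, hβ, R, hR, hd⟩
  · rintro ⟨α, hα, β, hβ, R, hR, hd⟩
    exact ⟨β, hβ, {α}, Set.singleton_subset_iff.2 hα, R, hR, hd⟩
end

section
/- Every bipolar ABA framework F = (ℒ, ℛ, 𝒜, ¯) with 𝒜 finite has a preferred extension. -/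
lemma bipolar_deduces_nonempty {S : Type*} {F : ABA S} (hF : F.Bipolar)
    {A : Set S} {R : Set (S × List S)} {φ : S} (h : F.Deduces A R φ) : A.Nonempty := by
  induction h with
  | assumption h => exact ⟨_, rfl⟩
  | step hr As Rs hd ih =>
    obtain ⟨α, -, hbody, -⟩ := hF _ hr
    have hlen : 0 < ‹List S›.length := by simp only [Prod.snd] at hbody; rw [hbody]; simp
    obtain ⟨a, ha⟩ := ih ⟨0, hlen⟩
    exact ⟨a, Set.mem_iUnion.2 ⟨⟨0, hlen⟩, ha⟩⟩

lemma bipolar_empty_admissible {S : Type*} {F : ABA S} (hF : F.Bipolar) :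
    F.Admissible ∅ := by
  refine ⟨Set.empty_subset _, ?_, ?_, by simp⟩
  · ext α
    simp only [ABA.Cl, Set.mem_setOf_eq, Set.mem_empty_iff_false, iff_false, not_and]
    rintro - ⟨A', hA', R, -, hd⟩
    obtain ⟨a, ha⟩ := bipolar_deduces_nonempty hF hd
    exact (hA' ha)
  · rintro ⟨β, hβ, -⟩
    exact hβ

/-- Every bipolar ABA framework with finitely many assumptions has a
preferred extension. -/
theorem bipolar_preferred_exists {S : Type*} (F : ABA S) (hF : F.Bipolar)
    (hfin : F.Asms.Finite) :
    ∃ E : Set S, F.Preferred E := by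
  have hfinadm : {E : Set S | F.Admissible E}.Finite := by
    apply hfin.finite_subsets.subset
    intro E hE
    exact hE.1
  obtain ⟨E, hE, hmax⟩ := Set.Finite.exists_maximalFor id _ hfinadm
    ⟨∅, bipolar_empty_admissible hF⟩
  exact ⟨E, hE, fun E' hE' hsub => (hmax hE' hsub).antisymm hsub⟩
end

section
/- Let F = (ℒ, ℛ, 𝒜, ¯) be a bipolar ABA framework and let A ⊆ 𝒜 be closed and conflict-free. If for every assumption β ∈ 𝒜 \ A such that {β} attacks A it holds that A attacks {β}, then A defends itself, and hence A is an admissible extension. -/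
lemma ABA.support_singleton {S : Type*} (F : ABA S) (hF : F.Bipolar) {A' : Set S}
    {R : Set (S × List S)} {φ : S} (h : F.Deduces A' R φ) (hR : R ⊆ F.Rules) :
    ∃ γ, A' = {γ} := by
  induction h with
  | assumption h => exact ⟨_, rfl⟩
  | @step φ body hr As Rs hd ih =>
    obtain ⟨α, hα, hbody, _⟩ := hF _ hr
    subst hbody
    set i0 : Fin [α].length := ⟨0, by simp⟩ with hi0
    have hRs : Rs i0 ⊆ F.Rules :=
      (Set.subset_iUnion Rs i0).trans ((Set.subset_insert _ _).trans hR)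
    obtain ⟨γ, hγ⟩ := ih i0 hRs
    refine ⟨γ, ?_⟩
    rw [show (⋃ i, As i) = As i0 from ?_, hγ]
    refine le_antisymm (Set.iUnion_subset fun i => ?_) (Set.subset_iUnion As i0)
    have : i = i0 := by
      apply Fin.ext
      have := i.2
      simp at this
      simp [hi0, this]
    rw [this]

/-- If a closed, conflict-free `A ⊆ 𝒜` counter-attacks every singleton
attacker `{β}` with `β ∈ 𝒜 \ A`, then `A` defends itself and hence is admissible. -/
theorem bipolar_singleton_defence_suffices {S : Type*} (F : ABA S) (hF : F.Bipolar)
    (A : Set S) (hA : A ⊆ F.Asms) (hcl : F.Closed A) (hcf : F.ConflictFree A)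
    (hdef : ∀ β ∈ F.Asms \ A, F.Attacks {β} A → F.Attacks A {β}) :
    (∀ α ∈ A, F.Defends A α) ∧ F.Admissible A := by
  have key : ∀ α ∈ A, F.Defends A α := by
    intro α hα B hB hBcl hatt
    obtain ⟨α', hα', A', hA', R, hR, hded⟩ := hatt
    have hα'A : α' ∈ A := by rw [Set.mem_singleton_iff.mp hα']; exact hα
    obtain ⟨γ, rfl⟩ := F.support_singleton hF hded hR
    have hγB : γ ∈ B := hA' rfl
    by_cases hγA : γ ∈ A
    · exact absurd ⟨α', hα'A, {γ}, Set.singleton_subset_iff.mpr hγA, R, hR, hded⟩ hcf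
    · obtain ⟨γ', hγ', A'', hA'', R', hR', hd'⟩ :=
        hdef γ ⟨hB hγB, hγA⟩ ⟨α', hα'A, {γ}, le_refl _, R, hR, hded⟩
      exact ⟨γ, hγB, A'', hA'', R', hR', by
        rwa [Set.mem_singleton_iff.mp hγ'] at hd'⟩
  exact ⟨key, hA, hcl, hcf, key⟩
end
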